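/- Let p_n = Σ_{i=0}^{3n−1} (−2)^i C(i+n−1, n−1) C(6n−2−i, 3n−1) for n ≥ 1. Then p_n satisfies the recursion h''_{n} p_{n+2} = h'_{n} p_{n+1} + h_{n} p_{n}, where h''_n = 729 n(1+n)(1+3n)(2+3n)(4+3n)(5+3n)(148+870n+1247n²), h'_n = 48 n(1+3n)(2+3n)(64845+611964n+2158381n²+3177680n³+2083331n⁴+496306n⁵), and h_n = 448(−1+7n)(1+7n)(2+7n)(3+7n)(4+7n)(5+7n)(2265+3364n+1247n²). -/

import Mathlib

open Finset

/-- `p_n = Σ_{i=0}^{3n−1} (−2)^i C(i+n−1, n−1) C(6n−2−i, 3n−1)`. -/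
def pSeq (n : ℕ) : ℤ :=
  ∑ i ∈ range (3 * n), (-2 : ℤ) ^ i *
    (Nat.choose (i + n - 1) (n - 1) : ℤ) * (Nat.choose (6 * n - 2 - i) (3 * n - 1) : ℤ)

lemma chainT2 (M K : ℕ) : ∀ s : ℕ, (Nat.choose (M+s) (K+s) : ℚ) * ∏ t ∈ range s, ((K:ℚ)+1+t)
    = (Nat.choose M K : ℚ) * ∏ t ∈ range s, ((M:ℚ)+1+t) := by
  intro s
  induction s with
  | zero => simp
  | succ s ih =>
    have h := Nat.add_one_mul_choose_eq (M+s) (K+s)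
    have hq : ((M:ℚ)+s+1) * (Nat.choose (M+s) (K+s) : ℚ)
        = (Nat.choose (M+s+1) (K+s+1) : ℚ) * ((K:ℚ)+s+1) := by
      exact_mod_cast congrArg (Nat.cast : ℕ → ℚ) h
    rw [Finset.prod_range_succ, Finset.prod_range_succ]
    rw [show M+(s+1) = M+s+1 from by omega, show K+(s+1) = K+s+1 from by omega]
    linear_combination ((M:ℚ)+1+s) * ih - (∏ t ∈ range s, ((K:ℚ)+1+t)) * hq

lemma chainT1 (M K : ℕ) : ∀ s : ℕ, K + s ≤ M →
    (Nat.choose M (K+s) : ℚ) * ∏ t ∈ range s, ((K:ℚ)+1+t)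
    = (Nat.choose M K : ℚ) * ∏ t ∈ range s, ((M:ℚ)-K-t) := by
  intro s
  induction s with
  | zero => simp
  | succ s ih =>
    intro hs
    have h := Nat.choose_succ_right_eq M (K+s)
    have hsub : ((M - (K+s) : ℕ) : ℚ) = (M:ℚ) - K - s := by
      have h2 : K + s ≤ M := by omega
      push_cast [h2]; ring
    have hq : (Nat.choose M (K+s+1) : ℚ) * ((K:ℚ)+s+1)
        = (Nat.choose M (K+s) : ℚ) * ((M:ℚ) - K - s) := by
      have hc := congrArg (Nat.cast : ℕ → ℚ) h
      push_cast at hc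
      rw [hsub] at hc
      convert hc using 2

    rw [Finset.prod_range_succ, Finset.prod_range_succ]
    rw [show K+(s+1) = K+s+1 from by omega]
    push_cast
    linear_combination (∏ t ∈ range s, ((K:ℚ)+1+t)) * hq + ((M:ℚ)-K-s) * ih (by omega)

set_option maxHeartbeats 4000000

/-- certificate function for creative telescoping -/
def wq (m i : ℕ) : ℚ :=
  ((-39031116833095372339200)*(i:ℚ) + 11997039528536170331520*(i:ℚ)^2 + (-462748339313829188928)*(i:ℚ)^3 + (-355335512296122237528)*(i:ℚ)^4 + 85505243801973951780*(i:ℚ)^5 + (-10370664281614152582)*(i:ℚ)^6 + 814574264427565191*(i:ℚ)^7 + (-44663343346735839)*(i:ℚ)^8 + 1755128722634595*(i:ℚ)^9 + (-49486356072351)*(i:ℚ)^10 + 980856306837*(i:ℚ)^11 + (-13007824533)*(i:ℚ)^12 + 103808925*(i:ℚ)^13 + (-377487)*(i:ℚ)^14 + (-163362923898710959146240)*(m:ℚ)*(i:ℚ) + 46995565257109358667936*(m:ℚ)*(i:ℚ)^2 + (-1777563038107228823208)*(m:ℚ)*(i:ℚ)^3 + (-1160918044851048955396)*(m:ℚ)*(i:ℚ)^4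 + 257838978001418736194*(m:ℚ)*(i:ℚ)^5 + (-28479026679509371857)*(m:ℚ)*(i:ℚ)^6 + 2015538431839128420*(m:ℚ)*(i:ℚ)^7 + (-98381771186116905)*(m:ℚ)*(i:ℚ)^8 + 3390963619673844*(m:ℚ)*(i:ℚ)^9 + (-82269825501995)*(m:ℚ)*(i:ℚ)^10 + 1367496879148*(m:ℚ)*(i:ℚ)^11 + (-14662758039)*(m:ℚ)*(i:ℚ)^12 + 89444322*(m:ℚ)*(i:ℚ)^13 + (-225504)*(m:ℚ)*(i:ℚ)^14 + (-318620817247702056823872)*(m:ℚ)^2*(i:ℚ) + 85360962773069624038656*(m:ℚ)^2*(i:ℚ)^2 + (-3141908253585586704784)*(m:ℚ)^2*(i:ℚ)^3 + (-1734096872565977005636)*(m:ℚ)^2*(i:ℚ)^4 + 352737858816593029212*(m:ℚ)^2*(i:ℚ)^5 + (-35131474825473254019)*(m:ℚ)^2*(i:ℚ)^6 + 2212835202675114699*(m:ℚ)^2*(i:ℚ)^7 + (-94659764645838132)*(m:ℚ)^2*(i:ℚ)^8 + 2803442331935125*(m:ℚ)^2*(i:ℚ)^9 + (-56902041745124)*(m:ℚ)^2*(i:ℚ)^10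 + 761459306997*(m:ℚ)^2*(i:ℚ)^11 + (-6188219292)*(m:ℚ)^2*(i:ℚ)^12 + 25645599*(m:ℚ)^2*(i:ℚ)^13 + (-33669)*(m:ℚ)^2*(i:ℚ)^14 + (-384139060089575829440928)*(m:ℚ)^3*(i:ℚ) + 95287563788434064922128*(m:ℚ)^3*(i:ℚ)^2 + (-3383444695103899455112)*(m:ℚ)^3*(i:ℚ)^3 + (-1565920843991695997492)*(m:ℚ)^3*(i:ℚ)^4 + 288981302883477298258*(m:ℚ)^3*(i:ℚ)^5 + (-25636368601932606883)*(m:ℚ)^3*(i:ℚ)^6 + 1414799862966628964*(m:ℚ)^3*(i:ℚ)^7 + (-51960870814176987)*(m:ℚ)^3*(i:ℚ)^8 + 1285597508325096*(m:ℚ)^3*(i:ℚ)^9 + (-20957539791041)*(m:ℚ)^3*(i:ℚ)^10 + 211668198388*(m:ℚ)^3*(i:ℚ)^11 + (-1158815901)*(m:ℚ)^3*(i:ℚ)^12 + 2446614*(m:ℚ)^3*(i:ℚ)^13 + (-320162019321038315527104)*(m:ℚ)^4*(i:ℚ) + 73030994223456164514720*(m:ℚ)^4*(i:ℚ)^2 +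 (-2476689113707241536840)*(m:ℚ)^4*(i:ℚ)^3 + (-952046728610498833600)*(m:ℚ)^4*(i:ℚ)^4 + 157525691698640431926*(m:ℚ)^4*(i:ℚ)^5 + (-12254935192143504357)*(m:ℚ)^4*(i:ℚ)^6 + 580520503512179814*(m:ℚ)^4*(i:ℚ)^7 + (-17797320501040941)*(m:ℚ)^4*(i:ℚ)^8 + 353161476569746*(m:ℚ)^4*(i:ℚ)^9 + (-4334955538247)*(m:ℚ)^4*(i:ℚ)^10 + 29371881210*(m:ℚ)^4*(i:ℚ)^11 + (-81235815)*(m:ℚ)^4*(i:ℚ)^12 + (-195397353321538166225568)*(m:ℚ)^5*(i:ℚ) + 40652791921646438112672*(m:ℚ)^5*(i:ℚ)^2 + (-1301366679785561470872)*(m:ℚ)^5*(i:ℚ)^3 + (-410535161065816931056)*(m:ℚ)^5*(i:ℚ)^4 + 59989940270225499104*(m:ℚ)^5*(i:ℚ)^5 + (-4009831443064097040)*(m:ℚ)^5*(i:ℚ)^6 + 158526531238670976*(m:ℚ)^5*(i:ℚ)^7 + (-3894833513576760)*(m:ℚ)^5*(i:ℚ)^8 + 58114272002760*(m:ℚ)^5*(i:ℚ)^9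 + (-477441298856)*(m:ℚ)^5*(i:ℚ)^10 + 1627584400*(m:ℚ)^5*(i:ℚ)^11 + (-90210678829846839115488)*(m:ℚ)^6*(i:ℚ) + 16948965438909224971296*(m:ℚ)^6*(i:ℚ)^2 + (-504992766629155300048)*(m:ℚ)^6*(i:ℚ)^3 + (-128739403555586175304)*(m:ℚ)^6*(i:ℚ)^4 + 16286084054524996794*(m:ℚ)^6*(i:ℚ)^5 + (-909469985505931326)*(m:ℚ)^6*(i:ℚ)^6 + 28809726807953892*(m:ℚ)^6*(i:ℚ)^7 + (-531824389928484)*(m:ℚ)^6*(i:ℚ)^8 + 5303908610962*(m:ℚ)^6*(i:ℚ)^9 + (-21873549686)*(m:ℚ)^6*(i:ℚ)^10 + (-32081564334693537419904)*(m:ℚ)^7*(i:ℚ) + 5376487459025652962688*(m:ℚ)^7*(i:ℚ)^2 + (-146532088601906068896)*(m:ℚ)^7*(i:ℚ)^3 + (-29579803157205583008)*(m:ℚ)^7*(i:ℚ)^4 + 3151794042692780508*(m:ℚ)^7*(i:ℚ)^5 + (-141187318832192496)*(m:ℚ)^7*(i:ℚ)^6 + 3359895879547656*(m:ℚ)^7*(i:ℚ)^7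 + (-41425107101232)*(m:ℚ)^7*(i:ℚ)^8 + 207107191932*(m:ℚ)^7*(i:ℚ)^9 + (-8860730430870462931488)*(m:ℚ)^8*(i:ℚ) + 1303964365348435035792*(m:ℚ)^8*(i:ℚ)^2 + (-31794620808459096864)*(m:ℚ)^8*(i:ℚ)^3 + (-4941898389998668164)*(m:ℚ)^8*(i:ℚ)^4 + 426107822482933488*(m:ℚ)^8*(i:ℚ)^5 + (-14357089285109400)*(m:ℚ)^8*(i:ℚ)^6 + 228168316927152*(m:ℚ)^8*(i:ℚ)^7 + (-1409224898580)*(m:ℚ)^8*(i:ℚ)^8 + (-1900632841838981941152)*(m:ℚ)^9*(i:ℚ) + 240615002182824425824*(m:ℚ)^9*(i:ℚ)^2 + (-5095244776746165608)*(m:ℚ)^9*(i:ℚ)^3 + (-585446057672062424)*(m:ℚ)^9*(i:ℚ)^4 + 38326905680367496*(m:ℚ)^9*(i:ℚ)^5 + (-863534343906632)*(m:ℚ)^9*(i:ℚ)^6 + 6874157691136*(m:ℚ)^9*(i:ℚ)^7 + (-314036557023437254848)*(m:ℚ)^10*(i:ℚ) + 33252469417425247200*(m:ℚ)^10*(i:ℚ)^2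 + (-586200299418625176)*(m:ℚ)^10*(i:ℚ)^3 + (-46677443276949432)*(m:ℚ)^10*(i:ℚ)^4 + 2064164399051448*(m:ℚ)^10*(i:ℚ)^5 + (-23328341515848)*(m:ℚ)^10*(i:ℚ)^6 + (-39250413386758452384)*(m:ℚ)^11*(i:ℚ) + 3337330538763184464*(m:ℚ)^11*(i:ℚ)^2 + (-45850688536696560)*(m:ℚ)^11*(i:ℚ)^3 + (-2248690010919120)*(m:ℚ)^11*(i:ℚ)^4 + 50426425643472*(m:ℚ)^11*(i:ℚ)^5 + (-3592230310531947168)*(m:ℚ)^12*(i:ℚ) + 229941860621737392*(m:ℚ)^12*(i:ℚ)^2 + (-2185392575626272)*(m:ℚ)^12*(i:ℚ)^3 + (-49497025849200)*(m:ℚ)^12*(i:ℚ)^4 + (-227266980800028480)*(m:ℚ)^13*(i:ℚ) + 9735279115707072*(m:ℚ)^13*(i:ℚ)^2 + (-47939984358912)*(m:ℚ)^13*(i:ℚ)^3 + (-8887596608341152)*(m:ℚ)^14*(i:ℚ) + 191083539615840*(m:ℚ)^14*(i:ℚ)^2 + (-161953253337024)*(m:ℚ)^15*(i:ℚ))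
    * (-2:ℚ)^i * (Nat.choose (i+m+2) (m+2) : ℚ) * (Nat.choose (6*m+16-i) (3*m+2) : ℚ)

set_option maxRecDepth 100000 in
lemma key (m i : ℕ) (hi : i ≤ 3*m+14) :
    (((m:ℚ)+3)*((m:ℚ)+4)*(3*(m:ℚ)+3)*(3*(m:ℚ)+4)*(3*(m:ℚ)+5)*(3*(m:ℚ)+6)*(3*(m:ℚ)+7)*(3*(m:ℚ)+8)) *
      ( (729*((m:ℚ)+3)*((m:ℚ)+4)*(3*(m:ℚ)+10)*(3*(m:ℚ)+11)*(3*(m:ℚ)+13)*(3*(m:ℚ)+14)*(13981 + 8352*(m:ℚ) + 1247*(m:ℚ)^2)) * ((-2:ℚ)^i * (Nat.choose (i+m+4) (m+4) : ℚ) * (Nat.choose (6*m+28-i) (3*m+14) : ℚ))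
      - (48*((m:ℚ)+3)*(3*(m:ℚ)+10)*(3*(m:ℚ)+11)*(396475695 + 525363288*(m:ℚ) + 277259995*(m:ℚ)^2 + 72845192*(m:ℚ)^3 + 9527921*(m:ℚ)^4 + 496306*(m:ℚ)^5)) * ((-2:ℚ)^i * (Nat.choose (i+m+3) (m+3) : ℚ) * (Nat.choose (6*m+22-i) (3*m+11) : ℚ))
      - (448*(7*(m:ℚ)+20)*(7*(m:ℚ)+22)*(7*(m:ℚ)+23)*(7*(m:ℚ)+24)*(7*(m:ℚ)+25)*(7*(m:ℚ)+26)*(23580 + 10846*(m:ℚ) + 1247*(m:ℚ)^2)) * ((-2:ℚ)^i * (Nat.choose (i+m+2) (m+2) : ℚ) * (Nat.choose (6*m+16-i) (3*m+8) : ℚ)) )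
    = wq m (i+1) - wq m i := by
  have hi' : (i:ℚ) ≤ 3*(m:ℚ)+14 := by exact_mod_cast hi
  have hm0 : (0:ℚ) ≤ (m:ℚ) := Nat.cast_nonneg m
  have hA1 : (Nat.choose (i+m+3) (m+3) : ℚ) * ((m:ℚ)+3)
      = (Nat.choose (i+m+2) (m+2) : ℚ) * ((i:ℚ)+(m:ℚ)+3) := by
    have h := Nat.add_one_mul_choose_eq (i+m+2) (m+2)
    have h' : (i+m+3) * Nat.choose (i+m+2) (m+2) = Nat.choose (i+m+3) (m+3) * (m+3) := by
      simpa using h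
    qify at h'
    linear_combination -h'
  have hA2 : (Nat.choose (i+m+4) (m+4) : ℚ) * ((m:ℚ)+4)
      = (Nat.choose (i+m+3) (m+3) : ℚ) * ((i:ℚ)+(m:ℚ)+4) := by
    have h := Nat.add_one_mul_choose_eq (i+m+3) (m+3)
    have h' : (i+m+4) * Nat.choose (i+m+3) (m+3) = Nat.choose (i+m+4) (m+4) * (m+4) := by
      simpa using h
    qify at h'
    linear_combination -h'
  have hA1p : (Nat.choose (i+m+3) (m+2) : ℚ) * ((i:ℚ)+1)
      = (Nat.choose (i+m+2) (m+2) : ℚ) * ((i:ℚ)+(m:ℚ)+3) := by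
    have h := Nat.choose_mul_succ_eq (i+m+2) (m+2)
    have h' : Nat.choose (i+m+2) (m+2) * (i+m+3) = Nat.choose (i+m+3) (m+2) * (i+1) := by
      rw [show i+m+2+1 = i+m+3 from by omega] at h
      rw [h, show i+m+3-(m+2) = i+1 from by omega]
    qify at h'
    linear_combination -h'
  have hB4 : (Nat.choose (6*m+28-i) (3*m+14) : ℚ) * ((3*(m:ℚ)+3)*(3*(m:ℚ)+4)*(3*(m:ℚ)+5)*(3*(m:ℚ)+6)*(3*(m:ℚ)+7)*(3*(m:ℚ)+8)*(3*(m:ℚ)+9)*(3*(m:ℚ)+10)*(3*(m:ℚ)+11)*(3*(m:ℚ)+12)*(3*(m:ℚ)+13)*(3*(m:ℚ)+14))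
      = (Nat.choose (6*m+16-i) (3*m+2) : ℚ) * ((6*(m:ℚ)+17-(i:ℚ))*(6*(m:ℚ)+18-(i:ℚ))*(6*(m:ℚ)+19-(i:ℚ))*(6*(m:ℚ)+20-(i:ℚ))*(6*(m:ℚ)+21-(i:ℚ))*(6*(m:ℚ)+22-(i:ℚ))*(6*(m:ℚ)+23-(i:ℚ))*(6*(m:ℚ)+24-(i:ℚ))*(6*(m:ℚ)+25-(i:ℚ))*(6*(m:ℚ)+26-(i:ℚ))*(6*(m:ℚ)+27-(i:ℚ))*(6*(m:ℚ)+28-(i:ℚ))) := by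
    have h := chainT2 (6*m+16-i) (3*m+2) 12
    rw [show 6*m+16-i+12 = 6*m+28-i from by omega, show 3*m+2+12 = 3*m+14 from by omega] at h
    simp only [Finset.prod_range_succ, Finset.prod_range_zero] at h
    rw [Nat.cast_sub (show i ≤ 6*m+16 from by omega)] at h
    push_cast at h
    linear_combination h
  have hB1 : (Nat.choose (6*m+15-i) (3*m+2) : ℚ) * (6*(m:ℚ)+16-(i:ℚ))
      = (Nat.choose (6*m+16-i) (3*m+2) : ℚ) * (3*(m:ℚ)+14-(i:ℚ)) := by
    have h := Nat.choose_mul_succ_eq (6*m+15-i) (3*m+2)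
    rw [show 6*m+15-i+1 = 6*m+16-i from by omega,
        show 6*m+16-i-(3*m+2) = 3*m+14-i from by omega] at h
    qify [show i ≤ 3*m+14 from hi, show i ≤ 6*m+16 from by omega] at h
    linear_combination h
  have hB2 : (Nat.choose (6*m+16-i) (3*m+8) : ℚ) * ((3*(m:ℚ)+3)*(3*(m:ℚ)+4)*(3*(m:ℚ)+5)*(3*(m:ℚ)+6)*(3*(m:ℚ)+7)*(3*(m:ℚ)+8))
      = (Nat.choose (6*m+16-i) (3*m+2) : ℚ) * ((3*(m:ℚ)+9-(i:ℚ))*(3*(m:ℚ)+10-(i:ℚ))*(3*(m:ℚ)+11-(i:ℚ))*(3*(m:ℚ)+12-(i:ℚ))*(3*(m:ℚ)+13-(i:ℚ))*(3*(m:ℚ)+14-(i:ℚ))) := by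
    rcases le_or_gt i (3*m+8) with hc8 | hc8
    · have h := chainT1 (6*m+16-i) (3*m+2) 6 (by omega)
      rw [show 3*m+2+6 = 3*m+8 from by omega] at h
      simp only [Finset.prod_range_succ, Finset.prod_range_zero] at h
      rw [Nat.cast_sub (show i ≤ 6*m+16 from by omega)] at h
      push_cast at h
      linear_combination h
    · have hz : Nat.choose (6*m+16-i) (3*m+8) = 0 := Nat.choose_eq_zero_of_lt (by omega)
      rw [hz]
      have h9 : i = 3*m+9 ∨ i = 3*m+10 ∨ i = 3*m+11 ∨ i = 3*m+12 ∨ i = 3*m+13 ∨ i = 3*m+14 := by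
        omega
      rcases h9 with rfl | rfl | rfl | rfl | rfl | rfl <;> push_cast <;> ring
  have hB3 : (Nat.choose (6*m+22-i) (3*m+11) : ℚ) * (((3*(m:ℚ)+3)*(3*(m:ℚ)+4)*(3*(m:ℚ)+5)*(3*(m:ℚ)+6)*(3*(m:ℚ)+7)*(3*(m:ℚ)+8))*((3*(m:ℚ)+9)*(3*(m:ℚ)+10)*(3*(m:ℚ)+11)))
      = (Nat.choose (6*m+16-i) (3*m+2) : ℚ) * (((6*(m:ℚ)+17-(i:ℚ))*(6*(m:ℚ)+18-(i:ℚ))*(6*(m:ℚ)+19-(i:ℚ))*(6*(m:ℚ)+20-(i:ℚ))*(6*(m:ℚ)+21-(i:ℚ))*(6*(m:ℚ)+22-(i:ℚ)))*((3*(m:ℚ)+12-(i:ℚ))*(3*(m:ℚ)+13-(i:ℚ))*(3*(m:ℚ)+14-(i:ℚ)))) := by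
    rcases le_or_gt i (3*m+11) with hc11 | hc11
    · have h1 := chainT2 (6*m+16-i) (3*m+2) 6
      rw [show 6*m+16-i+6 = 6*m+22-i from by omega, show 3*m+2+6 = 3*m+8 from by omega] at h1
      simp only [Finset.prod_range_succ, Finset.prod_range_zero] at h1
      rw [Nat.cast_sub (show i ≤ 6*m+16 from by omega)] at h1
      push_cast at h1
      have h2 := chainT1 (6*m+22-i) (3*m+8) 3 (by omega)
      rw [show 3*m+8+3 = 3*m+11 from by omega] at h2
      simp only [Finset.prod_range_succ, Finset.prod_range_zero] at h2
      rw [Nat.cast_sub (show i ≤ 6*m+22 from by omega)] at h2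
      push_cast at h2
      linear_combination ((3*(m:ℚ)+3)*(3*(m:ℚ)+4)*(3*(m:ℚ)+5)*(3*(m:ℚ)+6)*(3*(m:ℚ)+7)*(3*(m:ℚ)+8)) * h2 + (((3*(m:ℚ)+12-(i:ℚ))*(3*(m:ℚ)+13-(i:ℚ))*(3*(m:ℚ)+14-(i:ℚ)))) * h1
    · have hz : Nat.choose (6*m+22-i) (3*m+11) = 0 := Nat.choose_eq_zero_of_lt (by omega)
      rw [hz]
      have h9 : i = 3*m+12 ∨ i = 3*m+13 ∨ i = 3*m+14 := by omega
      rcases h9 with rfl | rfl | rfl <;> push_cast <;> ring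
  -- nonzero denominators
  have nzm3 : ((m:ℚ)+3) ≠ 0 := by positivity
  have nzm4 : ((m:ℚ)+4) ≠ 0 := by positivity
  have nzi1 : ((i:ℚ)+1) ≠ 0 := by positivity
  have nz616 : (6*(m:ℚ)+16-(i:ℚ)) ≠ 0 := by
    have : (0:ℚ) < 6*(m:ℚ)+16-(i:ℚ) := by linarith
    exact ne_of_gt this
  have nz3 : (3*(m:ℚ)+3) ≠ 0 := by positivity
  have nz4 : (3*(m:ℚ)+4) ≠ 0 := by positivity
  have nz5 : (3*(m:ℚ)+5) ≠ 0 := by positivity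
  have nz6 : (3*(m:ℚ)+6) ≠ 0 := by positivity
  have nz7 : (3*(m:ℚ)+7) ≠ 0 := by positivity
  have nz8 : (3*(m:ℚ)+8) ≠ 0 := by positivity
  have nz9 : (3*(m:ℚ)+9) ≠ 0 := by positivity
  have nz10 : (3*(m:ℚ)+10) ≠ 0 := by positivity
  have nz11 : (3*(m:ℚ)+11) ≠ 0 := by positivity
  have nz12 : (3*(m:ℚ)+12) ≠ 0 := by positivity
  have nz13 : (3*(m:ℚ)+13) ≠ 0 := by positivity
  have nz14 : (3*(m:ℚ)+14) ≠ 0 := by positivity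
  -- solved forms
  have sA1 : (Nat.choose (i+m+3) (m+3) : ℚ)
      = (Nat.choose (i+m+2) (m+2) : ℚ) * ((i:ℚ)+(m:ℚ)+3) / ((m:ℚ)+3) := by
    rw [eq_div_iff nzm3]; linear_combination hA1
  have sA2 : (Nat.choose (i+m+4) (m+4) : ℚ)
      = (Nat.choose (i+m+2) (m+2) : ℚ) * (((i:ℚ)+(m:ℚ)+3)*((i:ℚ)+(m:ℚ)+4)) / (((m:ℚ)+3)*((m:ℚ)+4)) := by
    rw [eq_div_iff (mul_ne_zero nzm3 nzm4)]
    linear_combination ((m:ℚ)+3) * hA2 + ((i:ℚ)+(m:ℚ)+4) * hA1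
  have sA1p : (Nat.choose (i+m+3) (m+2) : ℚ)
      = (Nat.choose (i+m+2) (m+2) : ℚ) * ((i:ℚ)+(m:ℚ)+3) / ((i:ℚ)+1) := by
    rw [eq_div_iff nzi1]; linear_combination hA1p
  have sB4 : (Nat.choose (6*m+28-i) (3*m+14) : ℚ)
      = (Nat.choose (6*m+16-i) (3*m+2) : ℚ) * ((6*(m:ℚ)+17-(i:ℚ))*(6*(m:ℚ)+18-(i:ℚ))*(6*(m:ℚ)+19-(i:ℚ))*(6*(m:ℚ)+20-(i:ℚ))*(6*(m:ℚ)+21-(i:ℚ))*(6*(m:ℚ)+22-(i:ℚ))*(6*(m:ℚ)+23-(i:ℚ))*(6*(m:ℚ)+24-(i:ℚ))*(6*(m:ℚ)+25-(i:ℚ))*(6*(m:ℚ)+26-(i:ℚ))*(6*(m:ℚ)+27-(i:ℚ))*(6*(m:ℚ)+28-(i:ℚ))) / ((3*(m:ℚ)+3)*(3*(m:ℚ)+4)*(3*(m:ℚ)+5)*(3*(m:ℚ)+6)*(3*(m:ℚ)+7)*(3*(m:ℚ)+8)*(3*(m:ℚ)+9)*(3*(m:ℚ)+10)*(3*(m:ℚ)+11)*(3*(m:ℚ)+12)*(3*(m:ℚ)+13)*(3*(m:ℚ)+14))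 := by
    rw [eq_div_iff (by positivity)]; linear_combination hB4
  have sB1 : (Nat.choose (6*m+15-i) (3*m+2) : ℚ)
      = (Nat.choose (6*m+16-i) (3*m+2) : ℚ) * (3*(m:ℚ)+14-(i:ℚ)) / (6*(m:ℚ)+16-(i:ℚ)) := by
    rw [eq_div_iff nz616]; linear_combination hB1
  have sB2 : (Nat.choose (6*m+16-i) (3*m+8) : ℚ)
      = (Nat.choose (6*m+16-i) (3*m+2) : ℚ) * ((3*(m:ℚ)+9-(i:ℚ))*(3*(m:ℚ)+10-(i:ℚ))*(3*(m:ℚ)+11-(i:ℚ))*(3*(m:ℚ)+12-(i:ℚ))*(3*(m:ℚ)+13-(i:ℚ))*(3*(m:ℚ)+14-(i:ℚ))) / ((3*(m:ℚ)+3)*(3*(m:ℚ)+4)*(3*(m:ℚ)+5)*(3*(m:ℚ)+6)*(3*(m:ℚ)+7)*(3*(m:ℚ)+8)) := by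
    rw [eq_div_iff (by positivity)]; linear_combination hB2
  have sB3 : (Nat.choose (6*m+22-i) (3*m+11) : ℚ)
      = (Nat.choose (6*m+16-i) (3*m+2) : ℚ) * (((6*(m:ℚ)+17-(i:ℚ))*(6*(m:ℚ)+18-(i:ℚ))*(6*(m:ℚ)+19-(i:ℚ))*(6*(m:ℚ)+20-(i:ℚ))*(6*(m:ℚ)+21-(i:ℚ))*(6*(m:ℚ)+22-(i:ℚ)))*((3*(m:ℚ)+12-(i:ℚ))*(3*(m:ℚ)+13-(i:ℚ))*(3*(m:ℚ)+14-(i:ℚ)))) / (((3*(m:ℚ)+3)*(3*(m:ℚ)+4)*(3*(m:ℚ)+5)*(3*(m:ℚ)+6)*(3*(m:ℚ)+7)*(3*(m:ℚ)+8))*((3*(m:ℚ)+9)*(3*(m:ℚ)+10)*(3*(m:ℚ)+11))) := by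
    rw [eq_div_iff (by positivity)]; linear_combination hB3
  simp only [wq]
  rw [show i+1+m+2 = i+m+3 from by omega, show 6*m+16-(i+1) = 6*m+15-i from by omega]
  rw [pow_succ]
  rw [sA2, sB4, sA1, sB3, sB2, sA1p, sB1]
  push_cast
  have nz616' : (m:ℚ)*6+16-(i:ℚ) ≠ 0 := by rw [mul_comm]; exact nz616
  field_simp
  ring

lemma wq_zero (m : ℕ) : wq m 0 = 0 := by
  simp [wq]

lemma wq_top (m : ℕ) : wq m (3*m+15) = 0 := by
  unfold wq
  rw [show 6*m+16-(3*m+15) = 3*m+1 from by omega,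
      Nat.choose_eq_zero_of_lt (show 3*m+1 < 3*m+2 from by omega)]
  simp

lemma pq2 (m : ℕ) : (pSeq (m+3+2) : ℚ) = ∑ i ∈ range (3*m+15),
    (-2:ℚ)^i * (Nat.choose (i+m+4) (m+4) : ℚ) * (Nat.choose (6*m+28-i) (3*m+14) : ℚ) := by
  show (pSeq (m+5) : ℚ) = _
  simp only [pSeq]
  push_cast
  rw [show 3*(m+5) = 3*m+15 from by ring]
  refine Finset.sum_congr rfl fun i _ => ?_
  rw [show i+(m+5)-1 = i+m+4 from by omega,
      show 6*(m+5)-2-i = 6*m+28-i from by omega, show 3*m+15-1 = 3*m+14 from by omega]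

lemma pq1 (m : ℕ) : (pSeq (m+3+1) : ℚ) = ∑ i ∈ range (3*m+15),
    (-2:ℚ)^i * (Nat.choose (i+m+3) (m+3) : ℚ) * (Nat.choose (6*m+22-i) (3*m+11) : ℚ) := by
  show (pSeq (m+4) : ℚ) = _
  simp only [pSeq]
  push_cast
  rw [show 3*(m+4) = 3*m+12 from by ring]
  refine Eq.trans (Finset.sum_subset (Finset.range_subset_range.mpr
      (show 3*m+12 ≤ 3*m+15 from by omega)) fun x hx hnx => ?_) ?_
  · simp only [Finset.mem_range] at hx hnx
    rw [Nat.choose_eq_zero_of_lt (show 6*(m+4)-2-x < 3*m+12-1 from by omega)]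
    simp
  · refine Finset.sum_congr rfl fun i _ => ?_
    rw [show i+(m+4)-1 = i+m+3 from by omega,
        show 6*(m+4)-2-i = 6*m+22-i from by omega, show 3*m+12-1 = 3*m+11 from by omega]

lemma pq0 (m : ℕ) : (pSeq (m+3) : ℚ) = ∑ i ∈ range (3*m+15),
    (-2:ℚ)^i * (Nat.choose (i+m+2) (m+2) : ℚ) * (Nat.choose (6*m+16-i) (3*m+8) : ℚ) := by
  simp only [pSeq]
  push_cast
  rw [show 3*(m+3) = 3*m+9 from by ring]
  refine Eq.trans (Finset.sum_subset (Finset.range_subset_range.mpr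
      (show 3*m+9 ≤ 3*m+15 from by omega)) fun x hx hnx => ?_) ?_
  · simp only [Finset.mem_range] at hx hnx
    rw [Nat.choose_eq_zero_of_lt (show 6*(m+3)-2-x < 3*m+9-1 from by omega)]
    simp
  · refine Finset.sum_congr rfl fun i _ => ?_
    rw [show i+(m+3)-1 = i+m+2 from by omega,
        show 6*(m+3)-2-i = 6*m+16-i from by omega, show 3*m+9-1 = 3*m+8 from by omega]

lemma big (m : ℕ) :
    (729*((m:ℚ)+3)*((m:ℚ)+4)*(3*(m:ℚ)+10)*(3*(m:ℚ)+11)*(3*(m:ℚ)+13)*(3*(m:ℚ)+14)*(13981 + 8352*(m:ℚ) + 1247*(m:ℚ)^2)) * (pSeq (m+3+2) : ℚ) - (48*((m:ℚ)+3)*(3*(m:ℚ)+10)*(3*(m:ℚ)+11)*(396475695 + 525363288*(m:ℚ) + 277259995*(m:ℚ)^2 + 72845192*(m:ℚ)^3 + 9527921*(m:ℚ)^4 + 496306*(m:ℚ)^5)) * (pSeq (m+3+1) : ℚ) - (448*(7*(m:ℚ)+20)*(7*(m:ℚ)+22)*(7*(m:ℚ)+23)*(7*(m:ℚ)+24)*(7*(m:ℚ)+25)*(7*(m:ℚ)+26)*(23580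 + 10846*(m:ℚ) + 1247*(m:ℚ)^2)) * (pSeq (m+3) : ℚ) = 0 := by
  have hC : ((((m:ℚ)+3)*((m:ℚ)+4)*(3*(m:ℚ)+3)*(3*(m:ℚ)+4)*(3*(m:ℚ)+5)*(3*(m:ℚ)+6)*(3*(m:ℚ)+7)*(3*(m:ℚ)+8)) : ℚ) ≠ 0 := by positivity
  have hterm : ∀ i ∈ range (3*m+15),
      (((m:ℚ)+3)*((m:ℚ)+4)*(3*(m:ℚ)+3)*(3*(m:ℚ)+4)*(3*(m:ℚ)+5)*(3*(m:ℚ)+6)*(3*(m:ℚ)+7)*(3*(m:ℚ)+8)) *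
      ( (729*((m:ℚ)+3)*((m:ℚ)+4)*(3*(m:ℚ)+10)*(3*(m:ℚ)+11)*(3*(m:ℚ)+13)*(3*(m:ℚ)+14)*(13981 + 8352*(m:ℚ) + 1247*(m:ℚ)^2)) * ((-2:ℚ)^i * (Nat.choose (i+m+4) (m+4) : ℚ) * (Nat.choose (6*m+28-i) (3*m+14) : ℚ))
      - (48*((m:ℚ)+3)*(3*(m:ℚ)+10)*(3*(m:ℚ)+11)*(396475695 + 525363288*(m:ℚ) + 277259995*(m:ℚ)^2 + 72845192*(m:ℚ)^3 + 9527921*(m:ℚ)^4 + 496306*(m:ℚ)^5)) * ((-2:ℚ)^i * (Nat.choose (i+m+3) (m+3) : ℚ) * (Nat.choose (6*m+22-i) (3*m+11) : ℚ))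
      - (448*(7*(m:ℚ)+20)*(7*(m:ℚ)+22)*(7*(m:ℚ)+23)*(7*(m:ℚ)+24)*(7*(m:ℚ)+25)*(7*(m:ℚ)+26)*(23580 + 10846*(m:ℚ) + 1247*(m:ℚ)^2)) * ((-2:ℚ)^i * (Nat.choose (i+m+2) (m+2) : ℚ) * (Nat.choose (6*m+16-i) (3*m+8) : ℚ)) )
      = wq m (i+1) - wq m i := fun i hi =>
    key m i (by simp only [Finset.mem_range] at hi; omega)
  have hbig : (((m:ℚ)+3)*((m:ℚ)+4)*(3*(m:ℚ)+3)*(3*(m:ℚ)+4)*(3*(m:ℚ)+5)*(3*(m:ℚ)+6)*(3*(m:ℚ)+7)*(3*(m:ℚ)+8)) * ((729*((m:ℚ)+3)*((m:ℚ)+4)*(3*(m:ℚ)+10)*(3*(m:ℚ)+11)*(3*(m:ℚ)+13)*(3*(m:ℚ)+14)*(13981 + 8352*(m:ℚ) + 1247*(m:ℚ)^2)) * (pSeq (m+3+2) : ℚ) - (48*((m:ℚ)+3)*(3*(m:ℚ)+10)*(3*(m:ℚ)+11)*(396475695 + 525363288*(m:ℚ) + 277259995*(m:ℚ)^2 + 72845192*(m:ℚ)^3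 + 9527921*(m:ℚ)^4 + 496306*(m:ℚ)^5)) * (pSeq (m+3+1) : ℚ)
      - (448*(7*(m:ℚ)+20)*(7*(m:ℚ)+22)*(7*(m:ℚ)+23)*(7*(m:ℚ)+24)*(7*(m:ℚ)+25)*(7*(m:ℚ)+26)*(23580 + 10846*(m:ℚ) + 1247*(m:ℚ)^2)) * (pSeq (m+3) : ℚ)) = 0 := by
    rw [pq2, pq1, pq0, Finset.mul_sum, Finset.mul_sum, Finset.mul_sum,
        ← Finset.sum_sub_distrib, ← Finset.sum_sub_distrib, Finset.mul_sum,
        Finset.sum_congr rfl hterm, Finset.sum_range_sub (fun j => wq m j),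
        wq_top, wq_zero]
    ring
  rcases mul_eq_zero.mp hbig with h | h
  · exact absurd h hC
  · exact h

/-- The recursion `h''_n p_{n+2} = h'_n p_{n+1} + h_n p_n` satisfied by `pSeq`. -/
theorem stmt_7 (n : ℕ) (hn : 1 ≤ n) :
    (729 * n * (1 + n) * (1 + 3 * n) * (2 + 3 * n) * (4 + 3 * n) * (5 + 3 * n) *
        (148 + 870 * n + 1247 * n ^ 2) : ℤ) * pSeq (n + 2) =
      (48 * n * (1 + 3 * n) * (2 + 3 * n) *
        (64845 + 611964 * n + 2158381 * n ^ 2 + 3177680 * n ^ 3 + 2083331 * n ^ 4 +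
          496306 * n ^ 5) : ℤ) * pSeq (n + 1) +
      (448 * (-1 + 7 * (n : ℤ)) * (1 + 7 * n) * (2 + 7 * n) * (3 + 7 * n) * (4 + 7 * n) *
        (5 + 7 * n) * (2265 + 3364 * n + 1247 * n ^ 2)) * pSeq n := by
  match n, hn with
  | 1, _ =>
    have e1 : pSeq 1 = 4 := by decide
    have e2 : pSeq 2 = 36 := by decide
    have e3 : pSeq 3 = 1980 := by decide
    norm_num [e1, e2, e3]
  | 2, _ =>
    have e2 : pSeq 2 = 36 := by decide
    have e3 : pSeq 3 = 1980 := by decide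
    have e4 : pSeq 4 = 26936 := by decide
    norm_num [e2, e3, e4]
  | (m+3), _ =>
    have h := big m
    have hq : (729 * ((m:ℚ)+3) * (1 + ((m:ℚ)+3)) * (1 + 3 * ((m:ℚ)+3)) * (2 + 3 * ((m:ℚ)+3))
        * (4 + 3 * ((m:ℚ)+3)) * (5 + 3 * ((m:ℚ)+3))
        * (148 + 870 * ((m:ℚ)+3) + 1247 * ((m:ℚ)+3) ^ 2)) * (pSeq (m+3+2) : ℚ) =
      (48 * ((m:ℚ)+3) * (1 + 3 * ((m:ℚ)+3)) * (2 + 3 * ((m:ℚ)+3)) *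
        (64845 + 611964 * ((m:ℚ)+3) + 2158381 * ((m:ℚ)+3) ^ 2 + 3177680 * ((m:ℚ)+3) ^ 3
          + 2083331 * ((m:ℚ)+3) ^ 4 + 496306 * ((m:ℚ)+3) ^ 5)) * (pSeq (m+3+1) : ℚ) +
      (448 * (-1 + 7 * ((m:ℚ)+3)) * (1 + 7 * ((m:ℚ)+3)) * (2 + 7 * ((m:ℚ)+3)) * (3 + 7 * ((m:ℚ)+3))
        * (4 + 7 * ((m:ℚ)+3)) * (5 + 7 * ((m:ℚ)+3))
        * (2265 + 3364 * ((m:ℚ)+3) + 1247 * ((m:ℚ)+3) ^ 2)) * (pSeq (m+3) : ℚ) := by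
      linear_combination h
    exact_mod_cast hq
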